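/- arXiv:1902.08149 — 2 statements merged into one kernel-verified Lean document; each statement's English description precedes it below -/
import Mathlib

section
/- Let A be a weighted automaton that is unambiguous from p to q, and for each transition δ = (r,a,s) let φ_δ(x) be the formula asserting that the prefix before position x labels a run from p to r, position x carries letter a, and the suffix after x labels a run from s to q. Then for every word u and position i (1 ≤ i ≤ |u|): u with x ↦ i satisfies φ_δ if and only if u labels some run from p to q and δ is the i-th transition of the unique such run. -/
variable {Q Q' A R : Type*}

/-- `RunFrom Δ p w ρ`: `ρ` is the list of states visited after `p` along a run
reading `w` that starts in `p`. -/
def RunFrom (Δ : Q → A → Q → Prop) : Q → List A → List Q → Prop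
  | _, [], [] => True
  | p, a :: w, q :: ρ => Δ p a q ∧ RunFrom Δ q w ρ
  | _, _, _ => False

/-- There is a run from `p` to `q` reading `w`. -/
def HasRun (Δ : Q → A → Q → Prop) (p : Q) (w : List A) (q : Q) : Prop :=
  ∃ ρ, RunFrom Δ p w ρ ∧ (p :: ρ).getLast (List.cons_ne_nil _ _) = q

/-- `m`-fold power of a word. -/
def wpow (u : List A) (m : ℕ) : List A := (List.replicate m u).flatten

/-- Aperiodicity of a nondeterministic automaton. -/
def Aperiodic (Δ : Q → A → Q → Prop) : Prop :=
  ∃ m, 1 ≤ m ∧ ∀ (p q : Q) (u : List A), u ≠ [] →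
    (HasRun Δ p (wpow u m) q ↔ HasRun Δ p (wpow u (m + 1)) q)

/-- `p` and `q` are in the same strongly connected component. -/
def SameSCC (Δ : Q → A → Q → Prop) (p q : Q) : Prop :=
  p = q ∨ ((∃ u : List A, u ≠ [] ∧ HasRun Δ p u q) ∧ (∃ v : List A, v ≠ [] ∧ HasRun Δ q v p))

/-- The automaton is unambiguous from `p` to `q`. -/
def UnambFromTo (Δ : Q → A → Q → Prop) (p q : Q) : Prop :=
  ∀ (u : List A) (ρ₁ ρ₂ : List Q), u ≠ [] →
    RunFrom Δ p u ρ₁ → RunFrom Δ p u ρ₂ →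
    (p :: ρ₁).getLast (List.cons_ne_nil _ _) = q →
    (p :: ρ₂).getLast (List.cons_ne_nil _ _) = q → ρ₁ = ρ₂

def SCCUnambiguous (Δ : Q → A → Q → Prop) : Prop :=
  ∀ p q : Q, SameSCC Δ p q → UnambFromTo Δ p q

/-- The set of accepting runs on `w`, represented as pairs of an initial state and
the list of subsequently visited states. -/
def AccRuns (Δ : Q → A → Q → Prop) (I F : Set Q) (w : List A) : Set (Q × List Q) :=
  {x | x.1 ∈ I ∧ RunFrom Δ x.1 w x.2 ∧ (x.1 :: x.2).getLast (List.cons_ne_nil _ _) ∈ F}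

/-- The sequence of weights along a run. -/
def wgtSeq (wgt : Q → A → Q → R) : Q → List A → List Q → List R
  | p, a :: w, q :: ρ => wgt p a q :: wgtSeq wgt q w ρ
  | _, _, _ => []


lemma getLast_congr {l₁ l₂ : List Q} (h₁ : l₁ ≠ []) (h₂ : l₂ ≠ []) (h : l₁ = l₂) :
    l₁.getLast h₁ = l₂.getLast h₂ := by subst h; rfl

lemma runFrom_length {Δ : Q → A → Q → Prop} :
    ∀ {p : Q} {u : List A} {ρ : List Q}, RunFrom Δ p u ρ → ρ.length = u.length
  | _, [], [], _ => rfl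
  | _, _ :: _, _ :: _, h => by simpa using runFrom_length h.2
  | _, [], _ :: _, h => h.elim
  | _, _ :: _, [], h => h.elim

lemma runFrom_append {Δ : Q → A → Q → Prop} :
    ∀ {p : Q} {u v : List A} {ρ σ : List Q}, RunFrom Δ p u ρ →
      RunFrom Δ ((p :: ρ).getLast (List.cons_ne_nil _ _)) v σ →
      RunFrom Δ p (u ++ v) (ρ ++ σ)
  | _, [], _, [], _, _, h2 => h2
  | _, _ :: _, _, _ :: _, _, h1, h2 =>
      ⟨h1.1, runFrom_append h1.2 (by simpa [List.getLast_cons] using h2)⟩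
  | _, [], _, _ :: _, _, h, _ => h.elim
  | _, _ :: _, _, [], _, h, _ => h.elim

lemma runFrom_split {Δ : Q → A → Q → Prop} :
    ∀ {p : Q} (u : List A) {v : List A} {τ : List Q}, RunFrom Δ p (u ++ v) τ →
      RunFrom Δ p u (τ.take u.length) ∧
      RunFrom Δ ((p :: τ.take u.length).getLast (List.cons_ne_nil _ _)) v
        (τ.drop u.length)
  | _, [], _, _, h => ⟨trivial, h⟩
  | _, a :: u, v, q :: τ, h => by
      obtain ⟨h1, h2⟩ := h
      obtain ⟨ih1, ih2⟩ := runFrom_split u h2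
      exact ⟨⟨h1, ih1⟩, by simpa [List.getLast_cons] using ih2⟩
  | _, _ :: _, _, [], h => h.elim

lemma runFrom_split' {Δ : Q → A → Q → Prop} {p : Q} {u : List A} {ρ : List Q}
    (h : RunFrom Δ p u ρ) (j : ℕ) (hj : j ≤ u.length) :
    RunFrom Δ p (u.take j) (ρ.take j) ∧
      RunFrom Δ ((p :: ρ.take j).getLast (List.cons_ne_nil _ _)) (u.drop j)
        (ρ.drop j) := by
  have h' : RunFrom Δ p (u.take j ++ u.drop j) ρ := by
    rwa [List.take_append_drop]
  have := runFrom_split (u.take j) h'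
  rwa [List.length_take, Nat.min_eq_left hj] at this

/-- For a weighted automaton unambiguous from `p` to `q` and a transition
`δ = (r,a,s)`, position `i` of `u` satisfies `φ_δ` (prefix runs `p → r`, letter `a` at
`i`, suffix runs `s → q`) iff `u` labels a run from `p` to `q` whose `i`-th transition
is `δ`. -/
theorem phi_delta_characterization (Δ : Q → A → Q → Prop) (wgt : Q → A → Q → R)
    (p q r s : Q) (a : A) (hδ : Δ r a s) (hunamb : UnambFromTo Δ p q)
    (u : List A) (i : ℕ) (hi1 : 1 ≤ i) (hi2 : i ≤ u.length) :
    (HasRun Δ p (u.take (i - 1)) r ∧ u[i - 1]? = some a ∧ HasRun Δ s (u.drop i) q) ↔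
      ∃ ρ : List Q, RunFrom Δ p u ρ ∧
        (p :: ρ).getLast (List.cons_ne_nil _ _) = q ∧
        (p :: ρ)[i - 1]? = some r ∧ u[i - 1]? = some a ∧ (p :: ρ)[i]? = some s := by
  obtain ⟨j, rfl⟩ : ∃ j, i = j + 1 := ⟨i - 1, (Nat.succ_pred_eq_of_pos hi1).symm⟩
  simp only [Nat.add_sub_cancel]
  have hj : j < u.length := hi2
  constructor
  · rintro ⟨⟨ρ₁, hρ₁, hr⟩, ha, ⟨ρ₂, hρ₂, hq⟩⟩
    have hlen1 : ρ₁.length = j := by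
      rw [runFrom_length hρ₁, List.length_take, Nat.min_eq_left hj.le]
    have hua : u[j] = a := by
      have := List.getElem?_eq_getElem hj
      rw [ha] at this
      exact (Option.some_inj.mp this).symm
    have hu : u = u.take j ++ u[j] :: u.drop (j + 1) := by
      conv_lhs => rw [← List.take_append_drop j u, List.drop_eq_getElem_cons hj]
    refine ⟨ρ₁ ++ s :: ρ₂, ?_, ?_, ?_, ha, ?_⟩
    · rw [hu]
      exact runFrom_append hρ₁ (by rw [hr]; exact ⟨hua ▸ hδ, hρ₂⟩)
    · show ((p :: ρ₁) ++ (s :: ρ₂)).getLast _ = q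
      rw [List.getLast_append_of_right_ne_nil _ _ (List.cons_ne_nil _ _)]
      exact hq
    · show ((p :: ρ₁) ++ (s :: ρ₂))[j]? = some r
      rw [List.getElem?_append_left (by simp [hlen1]),
        List.getElem?_eq_getElem (by simp [hlen1] : j < (p :: ρ₁).length)]
      rw [List.getLast_eq_getElem] at hr
      simpa [hlen1] using hr
    · show ((p :: ρ₁) ++ (s :: ρ₂))[j + 1]? = some s
      rw [List.getElem?_append_right (by simp [hlen1])]
      simp [hlen1]
  · rintro ⟨ρ, hρ, hq, hr, ha, hs⟩
    have hlen : ρ.length = u.length := runFrom_length hρ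
    obtain ⟨h1, h2⟩ := runFrom_split' hρ j hj.le
    have hlent : (ρ.take j).length = j := by
      rw [List.length_take, Nat.min_eq_left (by omega)]
    have hx : (p :: ρ.take j).getLast (List.cons_ne_nil _ _) = r := by
      rw [List.getLast_eq_getElem]
      have : (p :: ρ.take j)[j]? = (p :: ρ)[j]? := by
        rw [show (p :: ρ.take j) = (p :: ρ).take (j + 1) from rfl]
        rw [List.getElem?_take, if_pos (by omega)]
      rw [hr] at this
      have hjl : j < (p :: ρ.take j).length := by simp [hlent]
      rw [List.getElem?_eq_getElem hjl] at this
      simpa [hlent] using Option.some_inj.mp this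
    have hρj : j < ρ.length := by omega
    have hdropρ : ρ.drop j = ρ[j] :: ρ.drop (j + 1) := List.drop_eq_getElem_cons hρj
    have hρjs : ρ[j] = s := by
      have : (p :: ρ)[j + 1]? = some ρ[j] := by
        rw [List.getElem?_cons_succ, List.getElem?_eq_getElem hρj]
      rw [hs] at this
      exact (Option.some_inj.mp this).symm
    have hdropu : u.drop j = a :: u.drop (j + 1) := by
      rw [List.drop_eq_getElem_cons hj]
      congr 1
      have := List.getElem?_eq_getElem hj
      rw [ha] at this
      exact (Option.some_inj.mp this).symm
    rw [hx, hdropu, hdropρ, hρjs] at h2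
    refine ⟨⟨ρ.take j, h1, hx⟩, ha, ρ.drop (j + 1), h2.2, ?_⟩
    have hsplit : p :: ρ = (p :: ρ.take j) ++ (s :: ρ.drop (j + 1)) := by
      rw [show (p :: ρ.take j) ++ (s :: ρ.drop (j + 1)) =
        p :: (ρ.take j ++ s :: ρ.drop (j + 1)) from rfl, ← hρjs, ← hdropρ,
        List.take_append_drop]
    calc (s :: ρ.drop (j + 1)).getLast (List.cons_ne_nil _ _)
        = ((p :: ρ.take j) ++ (s :: ρ.drop (j + 1))).getLast
            (List.append_ne_nil_of_right_ne_nil _ (List.cons_ne_nil _ _)) :=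
          (List.getLast_append_of_right_ne_nil _ _ _).symm
      _ = (p :: ρ).getLast (List.cons_ne_nil _ _) := getLast_congr _ _ hsplit.symm
      _ = q := hq
end

section
/- Let A be an SCC-unambiguous automaton and let p, q be states not in the same SCC. Then for every word u, the runs of A from p to q reading u are in bijection with the pairs (δ̄, σ) where δ̄ = (δ₁,…,δ_m) is a sequence of switching transitions from p to q and σ is an increasing sequence of positions i₁ < ⋯ < i_m in u such that: the i_j-th letter of u is the label of δ_j, u[1, i₁−1] labels a run from p to the source of δ₁, each u[i_j+1, i_{j+1}−1] labels a run from the target of δ_j to the source of δ_{j+1}, and u[i_m+1, |u|] labels a run from the target of δ_m to q. -/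
variable {Q Q' A R : Type*}

/-- `GoodPair Δ p q u δs σ`: `δs` is a sequence of switching transitions from `p`
to `q` and `σ` a strictly increasing sequence of positions of `u` (1-indexed) such
that the letter at position `σ j` is the label of `δs j`, the prefix of `u` before
the first position labels a run from `p` to the source of the first switching
transition, each intermediate factor labels a run from the target of one switching
transition to the source of the next, and the suffix after the last position labels
a run from the target of the last switching transition to `q`. -/
def GoodPair (Δ : Q → A → Q → Prop) (p q : Q) (u : List A)
    (δs : List (Q × A × Q)) (σ : List ℕ) : Prop :=
  δs ≠ [] ∧ δs.length = σ.length ∧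
  (∀ d ∈ δs, Δ d.1 d.2.1 d.2.2) ∧
  List.Chain' (· < ·) σ ∧
  (∀ i ∈ σ, 1 ≤ i ∧ i ≤ u.length) ∧
  (∀ j : ℕ, ∀ d ∈ δs[j]?, ∀ i ∈ σ[j]?, u[i - 1]? = some d.2.1) ∧
  -- SCC alternation conditions making `δs` a switching sequence
  (∀ d ∈ δs.head?, SameSCC Δ p d.1) ∧
  (∀ d ∈ δs, ¬ SameSCC Δ d.1 d.2.2) ∧
  (∀ j : ℕ, ∀ d ∈ δs[j]?, ∀ d' ∈ δs[j + 1]?, SameSCC Δ d.2.2 d'.1) ∧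
  (∀ d ∈ δs.getLast?, SameSCC Δ d.2.2 q) ∧
  -- the factors of `u` between consecutive switching positions label runs
  (∀ d ∈ δs.head?, ∀ i ∈ σ.head?, HasRun Δ p (u.take (i - 1)) d.1) ∧
  (∀ j : ℕ, ∀ d ∈ δs[j]?, ∀ i ∈ σ[j]?, ∀ d' ∈ δs[j + 1]?, ∀ i' ∈ σ[j + 1]?,
    HasRun Δ d.2.2 ((u.take (i' - 1)).drop i) d'.1) ∧
  (∀ d ∈ δs.getLast?, ∀ i ∈ σ.getLast?, HasRun Δ d.2.2 (u.drop i) q)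

variable {Δ : Q → A → Q → Prop}

/-- end state of a run starting at `p` visiting `ρ`. -/
def endOf (p : Q) (ρ : List Q) : Q := ρ.getLastD p

@[simp] lemma endOf_nil (p : Q) : endOf p ([] : List Q) = p := rfl

@[simp] lemma endOf_cons (p r : Q) (ρ : List Q) : endOf p (r :: ρ) = endOf r ρ := by
  cases ρ <;> simp [endOf, List.getLastD]

lemma getLast_eq_endOf (p : Q) (ρ : List Q) :
    (p :: ρ).getLast (List.cons_ne_nil _ _) = endOf p ρ := by
  induction ρ generalizing p with
  | nil => rfl
  | cons r ρ ih => rw [List.getLast_cons_cons, ih]; simp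

lemma endOf_append (p : Q) (ρ₁ ρ₂ : List Q) :
    endOf p (ρ₁ ++ ρ₂) = endOf (endOf p ρ₁) ρ₂ := by
  induction ρ₁ generalizing p with
  | nil => simp
  | cons r ρ ih => simp [ih]

@[simp] lemma runFrom_nil_iff (p : Q) (ρ : List Q) : RunFrom Δ p [] ρ ↔ ρ = [] := by
  cases ρ <;> simp [RunFrom]

@[simp] lemma runFrom_cons_cons (p r : Q) (a : A) (w : List A) (ρ : List Q) :
    RunFrom Δ p (a :: w) (r :: ρ) ↔ Δ p a r ∧ RunFrom Δ r w ρ := Iff.rfl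

@[simp] lemma runFrom_cons_nil (p : Q) (a : A) (w : List A) :
    ¬ RunFrom Δ p (a :: w) [] := by simp [RunFrom]

lemma RunFrom.length_eq : ∀ {p : Q} {w : List A} {ρ : List Q}, RunFrom Δ p w ρ → ρ.length = w.length := by
  intro p w
  induction w generalizing p with
  | nil => intro ρ h; simp_all
  | cons a w ih =>
    intro ρ h
    cases ρ with
    | nil => simp_all
    | cons r ρ => simpa using ih h.2

lemma RunFrom.append {p : Q} {w₁ w₂ : List A} {ρ₁ ρ₂ : List Q}
    (h₁ : RunFrom Δ p w₁ ρ₁) (h₂ : RunFrom Δ (endOf p ρ₁) w₂ ρ₂) :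
    RunFrom Δ p (w₁ ++ w₂) (ρ₁ ++ ρ₂) := by
  induction w₁ generalizing p ρ₁ with
  | nil => obtain rfl := (runFrom_nil_iff _ _).1 h₁; simpa using h₂
  | cons a w ih =>
    cases ρ₁ with
    | nil => simp_all
    | cons r ρ => exact ⟨h₁.1, ih h₁.2 (by simpa using h₂)⟩

lemma RunFrom.take {p : Q} {w : List A} {ρ : List Q} (h : RunFrom Δ p w ρ) (n : ℕ) :
    RunFrom Δ p (w.take n) (ρ.take n) := by
  induction w generalizing p ρ n with
  | nil => obtain rfl := (runFrom_nil_iff _ _).1 h; simp [RunFrom]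
  | cons a w ih =>
    cases ρ with
    | nil => simp_all
    | cons r ρ =>
      cases n with
      | zero => simp [RunFrom]
      | succ n => exact ⟨h.1, ih h.2 n⟩

lemma RunFrom.drop {p : Q} {w : List A} {ρ : List Q} (h : RunFrom Δ p w ρ) (n : ℕ) :
    RunFrom Δ (endOf p (ρ.take n)) (w.drop n) (ρ.drop n) := by
  induction w generalizing p ρ n with
  | nil => obtain rfl := (runFrom_nil_iff _ _).1 h; simp [h]
  | cons a w ih =>
    cases ρ with
    | nil => simp_all
    | cons r ρ =>
      cases n with
      | zero => simpa using h
      | succ n => simpa using ih h.2 n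

lemma RunFrom.step' {p : Q} {w : List A} {ρ : List Q} (h : RunFrom Δ p w ρ) :
    ∀ (t : ℕ) (a : A) (x y : Q), w[t]? = some a → (p :: ρ)[t]? = some x → ρ[t]? = some y →
      Δ x a y := by
  induction w generalizing p ρ with
  | nil => obtain rfl := (runFrom_nil_iff _ _).1 h; simp
  | cons b w ih =>
    cases ρ with
    | nil => simp_all
    | cons r ρ =>
      intro t a x y ha hx hy
      cases t with
      | zero =>
        simp only [List.getElem?_cons_zero, Option.some.injEq] at ha hx hy
        subst ha; subst hx; subst hy; exact h.1
      | succ t =>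
        simp only [List.getElem?_cons_succ] at ha hx hy
        exact ih h.2 t a x y ha hx hy

lemma endOf_take_eq {p : Q} {ρ : List Q} :
    ∀ (t : ℕ) (x : Q), (p :: ρ)[t]? = some x → endOf p (ρ.take t) = x := by
  induction ρ generalizing p with
  | nil =>
    intro t x hx
    cases t with
    | zero => simp at hx; simp [hx]
    | succ t => simp at hx
  | cons r ρ ih =>
    intro t x hx
    cases t with
    | zero => simp at hx; simp [hx]
    | succ t => simpa using ih t x (by simpa using hx)


lemma hasRun_iff {p q : Q} {w : List A} :
    HasRun Δ p w q ↔ ∃ ρ, RunFrom Δ p w ρ ∧ endOf p ρ = q := by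
  unfold HasRun
  simp only [getLast_eq_endOf]

@[simp] lemma hasRun_nil_iff {p q : Q} : HasRun Δ p ([] : List A) q ↔ p = q := by
  rw [hasRun_iff]
  constructor
  · rintro ⟨ρ, h, rfl⟩; obtain rfl := (runFrom_nil_iff _ _).1 h; simp
  · rintro rfl; exact ⟨[], by simp [RunFrom], rfl⟩

lemma HasRun.trans {p r q : Q} {w₁ w₂ : List A} (h₁ : HasRun Δ p w₁ r)
    (h₂ : HasRun Δ r w₂ q) : HasRun Δ p (w₁ ++ w₂) q := by
  rw [hasRun_iff] at h₁ h₂ ⊢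
  obtain ⟨ρ₁, hr₁, rfl⟩ := h₁
  obtain ⟨ρ₂, hr₂, rfl⟩ := h₂
  exact ⟨ρ₁ ++ ρ₂, hr₁.append hr₂, endOf_append _ _ _⟩

lemma hasRun_single {p q : Q} {a : A} (h : Δ p a q) : HasRun Δ p [a] q := by
  rw [hasRun_iff]
  exact ⟨[q], ⟨h, trivial⟩, rfl⟩

/-- reachability -/
def Reach (Δ : Q → A → Q → Prop) (p q : Q) : Prop := ∃ w, HasRun Δ p w q

lemma Reach.refl (p : Q) : Reach Δ p p := ⟨[], hasRun_nil_iff.2 rfl⟩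

lemma Reach.trans {p r q : Q} (h₁ : Reach Δ p r) (h₂ : Reach Δ r q) : Reach Δ p q := by
  obtain ⟨w₁, h₁⟩ := h₁; obtain ⟨w₂, h₂⟩ := h₂
  exact ⟨w₁ ++ w₂, h₁.trans h₂⟩

lemma Reach.step {p q : Q} {a : A} (h : Δ p a q) : Reach Δ p q := ⟨[a], hasRun_single h⟩

lemma Reach.ofHasRun {p q : Q} {w : List A} (h : HasRun Δ p w q) : Reach Δ p q := ⟨w, h⟩

lemma sameSCC_iff_reach {p q : Q} : SameSCC Δ p q ↔ Reach Δ p q ∧ Reach Δ q p := by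
  constructor
  · rintro (rfl | ⟨⟨w, _, hw⟩, ⟨v, _, hv⟩⟩)
    · exact ⟨Reach.refl p, Reach.refl p⟩
    · exact ⟨⟨w, hw⟩, ⟨v, hv⟩⟩
  · rintro ⟨⟨w, hw⟩, ⟨v, hv⟩⟩
    by_cases h : p = q
    · exact Or.inl h
    · refine Or.inr ⟨⟨w, ?_, hw⟩, ⟨v, ?_, hv⟩⟩ <;> rintro rfl
      · exact h (hasRun_nil_iff.1 hw)
      · exact h (hasRun_nil_iff.1 hv).symm

@[simp] lemma SameSCC.refl (p : Q) : SameSCC Δ p p := Or.inl rfl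

lemma SameSCC.symm {p q : Q} (h : SameSCC Δ p q) : SameSCC Δ q p := by
  rw [sameSCC_iff_reach] at h ⊢; exact ⟨h.2, h.1⟩

lemma SameSCC.trans {p r q : Q} (h₁ : SameSCC Δ p r) (h₂ : SameSCC Δ r q) : SameSCC Δ p q := by
  rw [sameSCC_iff_reach] at h₁ h₂ ⊢
  exact ⟨h₁.1.trans h₂.1, h₂.2.trans h₁.2⟩

/-- In a run whose endpoints are in the same SCC, every step stays in the SCC. -/
lemma steps_same_of_sameSCC {p : Q} {w : List A} {ρ : List Q} (h : RunFrom Δ p w ρ)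
    (hscc : SameSCC Δ p (endOf p ρ)) :
    ∀ (t : ℕ) (x y : Q), (p :: ρ)[t]? = some x → ρ[t]? = some y → SameSCC Δ x y := by
  intro t x y hx hy
  have hy' : (p :: ρ)[t+1]? = some y := by simpa using hy
  have htlen : t < ρ.length := by
    by_contra hc
    rw [List.getElem?_eq_none (by omega)] at hy
    simp at hy
  have hxw : t < w.length := h.length_eq ▸ htlen
  -- Reach p x
  have hpx : Reach Δ p x := by
    refine ⟨w.take t, ?_⟩
    rw [hasRun_iff]
    exact ⟨ρ.take t, h.take t, endOf_take_eq t x hx⟩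
  -- Reach y (endOf p ρ)
  have hyend : Reach Δ y (endOf p ρ) := by
    refine ⟨w.drop (t+1), ?_⟩
    rw [hasRun_iff]
    refine ⟨ρ.drop (t+1), ?_, ?_⟩
    · have := h.drop (t+1)
      rwa [endOf_take_eq (t+1) y hy'] at this
    · rw [← endOf_take_eq (t+1) y hy', ← endOf_append, List.take_append_drop]
  -- step
  have hxy : Reach Δ x y :=
    Reach.step (h.step' t (w[t]'hxw) x y (by simp [hxw]) hx hy)
  rw [sameSCC_iff_reach]
  refine ⟨hxy, ?_⟩
  have : Reach Δ (endOf p ρ) p := (sameSCC_iff_reach.1 hscc.symm).1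
  exact (hyend.trans this).trans hpx


lemma run_unique (hu : SCCUnambiguous Δ) {p r : Q} {w : List A} {ρ₁ ρ₂ : List Q}
    (hs : SameSCC Δ p r) (h₁ : RunFrom Δ p w ρ₁) (h₂ : RunFrom Δ p w ρ₂)
    (e₁ : endOf p ρ₁ = r) (e₂ : endOf p ρ₂ = r) : ρ₁ = ρ₂ := by
  cases w with
  | nil =>
    obtain rfl := (runFrom_nil_iff _ _).1 h₁
    obtain rfl := (runFrom_nil_iff _ _).1 h₂
    rfl
  | cons a w =>
    exact hu p r hs (a :: w) ρ₁ ρ₂ (List.cons_ne_nil _ _) h₁ h₂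
      (by rw [getLast_eq_endOf]; exact e₁) (by rw [getLast_eq_endOf]; exact e₂)

/-- First-switch data: position `i` (1-indexed, `> k`), transition `δ`. -/
structure FSw (Δ : Q → A → Q → Prop) (p : Q) (u : List A) (k : ℕ) (y : ℕ × Q × A × Q) : Prop where
  lb : k + 1 ≤ y.1
  ub : y.1 ≤ u.length
  lab : u[y.1 - 1]? = some y.2.2.1
  tr : Δ y.2.1 y.2.2.1 y.2.2.2
  scc : SameSCC Δ p y.2.1
  sw : ¬ SameSCC Δ y.2.1 y.2.2.2
  run : HasRun Δ p ((u.take (y.1 - 1)).drop k) y.2.1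

/-- `GoodPair` shifted to start at offset `k`. -/
structure GPF (Δ : Q → A → Q → Prop) (p q : Q) (u : List A) (k : ℕ)
    (δs : List (Q × A × Q)) (σ : List ℕ) : Prop where
  ne : δs ≠ []
  len : δs.length = σ.length
  trs : ∀ d ∈ δs, Δ d.1 d.2.1 d.2.2
  chain : List.Chain' (· < ·) σ
  bounds : ∀ i ∈ σ, k + 1 ≤ i ∧ i ≤ u.length
  letter : ∀ j : ℕ, ∀ d ∈ δs[j]?, ∀ i ∈ σ[j]?, u[i - 1]? = some d.2.1
  head_scc : ∀ d ∈ δs.head?, SameSCC Δ p d.1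
  switch : ∀ d ∈ δs, ¬ SameSCC Δ d.1 d.2.2
  mid_scc : ∀ j : ℕ, ∀ d ∈ δs[j]?, ∀ d' ∈ δs[j + 1]?, SameSCC Δ d.2.2 d'.1
  last_scc : ∀ d ∈ δs.getLast?, SameSCC Δ d.2.2 q
  head_run : ∀ d ∈ δs.head?, ∀ i ∈ σ.head?, HasRun Δ p ((u.take (i - 1)).drop k) d.1
  mid_run : ∀ j : ℕ, ∀ d ∈ δs[j]?, ∀ i ∈ σ[j]?, ∀ d' ∈ δs[j + 1]?, ∀ i' ∈ σ[j + 1]?,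
    HasRun Δ d.2.2 ((u.take (i' - 1)).drop i) d'.1
  last_run : ∀ d ∈ δs.getLast?, ∀ i ∈ σ.getLast?, HasRun Δ d.2.2 (u.drop i) q

/-- generalized pair predicate: either trivial (same SCC) or a genuine good pair. -/
def GPX (Δ : Q → A → Q → Prop) (p q : Q) (u : List A) (k : ℕ)
    (δs : List (Q × A × Q)) (σ : List ℕ) : Prop :=
  (δs = [] ∧ σ = [] ∧ SameSCC Δ p q ∧ HasRun Δ p (u.drop k) q) ∨ GPF Δ p q u k δs σ

lemma GPF_cons {p q : Q} {u : List A} {k : ℕ} {δ : Q × A × Q} {δs : List (Q × A × Q)}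
    {i : ℕ} {σ : List ℕ} :
    GPF Δ p q u k (δ :: δs) (i :: σ) ↔
      FSw Δ p u k (i, δ) ∧ GPX Δ δ.2.2 q u i δs σ := by
  constructor
  · intro h
    have hb := h.bounds i (by simp)
    refine ⟨⟨hb.1, hb.2, h.letter 0 δ (by simp) i (by simp), h.trs δ (by simp),
      h.head_scc δ (by simp), h.switch δ (by simp), h.head_run δ (by simp) i (by simp)⟩, ?_⟩
    cases δs with
    | nil =>
      have hσ : σ = [] := by simpa using h.len.symm
      subst hσ
      exact Or.inl ⟨rfl, rfl, h.last_scc δ (by simp), h.last_run δ (by simp) i (by simp)⟩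
    | cons δ' δs' =>
      cases σ with
      | nil => simpa using h.len
      | cons i' σ' =>
        have hpw := List.isChain_iff_pairwise.mp h.chain
        refine Or.inr ⟨List.cons_ne_nil _ _, by simpa using h.len,
          fun d hd => h.trs d (List.mem_cons_of_mem _ hd),
          (List.isChain_cons.mp h.chain).2,
          ?_, ?_, ?_, fun d hd => h.switch d (List.mem_cons_of_mem _ hd), ?_, ?_, ?_, ?_, ?_⟩
        · intro j hj
          have h1 : i < j := (List.pairwise_cons.mp hpw).1 j hj
          have h2 := h.bounds j (List.mem_cons_of_mem _ hj)
          omega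
        · intro j d hd i'' hi''
          exact h.letter (j + 1) d (by simpa using hd) i'' (by simpa using hi'')
        · intro d hd
          simp only [List.head?_cons, Option.mem_def, Option.some.injEq] at hd
          subst hd
          exact h.mid_scc 0 δ (by simp) δ' (by simp)
        · intro j d hd d' hd'
          exact h.mid_scc (j + 1) d (by simpa using hd) d' (by simpa using hd')
        · intro d hd
          exact h.last_scc d (by simpa using hd)
        · intro d hd i'' hi''
          simp only [List.head?_cons, Option.mem_def, Option.some.injEq] at hd hi''
          subst hd; subst hi''
          exact h.mid_run 0 δ (by simp) i (by simp) δ' (by simp) i' (by simp)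
        · intro j d hd i'' hi'' d' hd' i''' hi'''
          exact h.mid_run (j + 1) d (by simpa using hd) i'' (by simpa using hi'')
            d' (by simpa using hd') i''' (by simpa using hi''')
        · intro d hd i'' hi''
          exact h.last_run d (by simpa using hd) i'' (by simpa using hi'')
  · rintro ⟨hF, hX⟩
    rcases hX with ⟨rfl, rfl, hscc, hrun⟩ | hG
    · refine ⟨List.cons_ne_nil _ _, rfl, ?_, List.isChain_singleton i,
        ?_, ?_, ?_, ?_, ?_, ?_, ?_, ?_, ?_⟩
      · intro d hd
        simp only [List.mem_singleton] at hd
        subst hd; exact hF.tr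
      · intro j hj
        simp only [List.mem_singleton] at hj
        subst hj; exact ⟨hF.lb, hF.ub⟩
      · intro j d hd i'' hi''
        cases j with
        | zero =>
          simp only [List.getElem?_cons_zero, Option.mem_def, Option.some.injEq] at hd hi''
          subst hd; subst hi''; exact hF.lab
        | succ j => simp at hd
      · intro d hd
        simp only [List.head?_cons, Option.mem_def, Option.some.injEq] at hd
        subst hd; exact hF.scc
      · intro d hd
        simp only [List.mem_singleton] at hd
        subst hd; exact hF.sw
      · intro j d hd d' hd'
        cases j <;> simp at hd'
      · intro d hd
        simp only [List.getLast?_singleton, Option.mem_def, Option.some.injEq] at hd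
        subst hd; exact hscc
      · intro d hd i'' hi''
        simp only [List.head?_cons, Option.mem_def, Option.some.injEq] at hd hi''
        subst hd; subst hi''; exact hF.run
      · intro j d hd i'' hi'' d' hd' i''' hi'''
        cases j <;> simp at hd'
      · intro d hd i'' hi''
        simp only [List.getLast?_singleton, Option.mem_def, Option.some.injEq] at hd hi''
        subst hd; subst hi''; exact hrun
    · cases δs with
      | nil => exact absurd rfl hG.ne
      | cons δ' δs' =>
        cases σ with
        | nil => simpa using hG.len
        | cons i' σ' =>
          have hii' : i < i' := by
            have := (hG.bounds i' (by simp)).1; omega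
          refine ⟨List.cons_ne_nil _ _, by simpa using hG.len, ?_,
            List.isChain_cons_cons.mpr ⟨hii', hG.chain⟩, ?_, ?_, ?_, ?_, ?_, ?_, ?_, ?_, ?_⟩
          · intro d hd
            rcases List.mem_cons.mp hd with rfl | hd
            · exact hF.tr
            · exact hG.trs d hd
          · intro j hj
            rcases List.mem_cons.mp hj with rfl | hj
            · exact ⟨hF.lb, hF.ub⟩
            · have := hG.bounds j hj
              have := hF.lb
              omega
          · intro j d hd i'' hi''
            cases j with
            | zero =>
              simp only [List.getElem?_cons_zero, Option.mem_def, Option.some.injEq] at hd hi''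
              subst hd; subst hi''; exact hF.lab
            | succ j => exact hG.letter j d (by simpa using hd) i'' (by simpa using hi'')
          · intro d hd
            simp only [List.head?_cons, Option.mem_def, Option.some.injEq] at hd
            subst hd; exact hF.scc
          · intro d hd
            rcases List.mem_cons.mp hd with rfl | hd
            · exact hF.sw
            · exact hG.switch d hd
          · intro j d hd d' hd'
            cases j with
            | zero =>
              simp only [List.getElem?_cons_zero, Option.mem_def, Option.some.injEq] at hd
              subst hd
              refine hG.head_scc d' ?_
              simpa [List.head?_eq_getElem?] using hd'
            | succ j => exact hG.mid_scc j d (by simpa using hd) d' (by simpa using hd')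
          · intro d hd
            rw [List.getLast?_cons_cons] at hd
            exact hG.last_scc d hd
          · intro d hd i'' hi''
            simp only [List.head?_cons, Option.mem_def, Option.some.injEq] at hd hi''
            subst hd; subst hi''; exact hF.run
          · intro j d hd i'' hi'' d' hd' i''' hi'''
            cases j with
            | zero =>
              simp only [List.getElem?_cons_zero, Option.mem_def, Option.some.injEq] at hd hi''
              subst hd; subst hi''
              refine hG.head_run d' ?_ i''' ?_
              · simpa [List.head?_eq_getElem?] using hd'
              · simpa [List.head?_eq_getElem?] using hi'''
            | succ j =>
              exact hG.mid_run j d (by simpa using hd) i'' (by simpa using hi'')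
                d' (by simpa using hd') i''' (by simpa using hi''')
          · intro d hd i'' hi''
            rw [List.getLast?_cons_cons] at hd hi''
            exact hG.last_run d hd i'' hi''

lemma sccChain {p : Q} {w : List A} {ρ : List Q} (h : RunFrom Δ p w ρ)
    (hs : ∀ (t : ℕ) (x y : Q), (p :: ρ)[t]? = some x → ρ[t]? = some y → SameSCC Δ x y) :
    SameSCC Δ p (endOf p ρ) := by
  induction w generalizing p ρ with
  | nil => obtain rfl := (runFrom_nil_iff _ _).1 h; simp
  | cons a w ih =>
    cases ρ with
    | nil => simp_all
    | cons r ρ =>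
      have h0 : SameSCC Δ p r := hs 0 p r (by simp) (by simp)
      have htail : SameSCC Δ r (endOf r ρ) := by
        refine ih h.2 ?_
        intro t x y hx hy
        exact hs (t + 1) x y (by simpa using hx) (by simpa using hy)
      simpa using h0.trans htail

lemma GPF_reach {q : Q} {u : List A} : ∀ {δs : List (Q × A × Q)} {σ : List ℕ} {p : Q} {k : ℕ},
    GPF Δ p q u k δs σ → ∀ d ∈ δs.head?, Reach Δ d.2.2 q := by
  intro δs
  induction δs with
  | nil => intro σ p k h; exact absurd rfl h.ne
  | cons δ δs ih =>
    intro σ p k h d hd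
    simp only [List.head?_cons, Option.mem_def, Option.some.injEq] at hd
    subst hd
    cases σ with
    | nil => simpa using h.len
    | cons i σ =>
      rcases (GPF_cons.mp h).2 with ⟨rfl, rfl, hscc, hrun⟩ | hG
      · exact (sameSCC_iff_reach.mp hscc).1
      · cases δs with
        | nil => exact absurd rfl hG.ne
        | cons δ' δs' =>
          have h1 : SameSCC Δ δ.2.2 δ'.1 := hG.head_scc δ' (by simp)
          have h2 : Reach Δ δ'.1 δ'.2.2 := Reach.step (hG.trs δ' (by simp))
          have h3 : Reach Δ δ'.2.2 q := ih hG δ' (by simp)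
          exact ((sameSCC_iff_reach.mp h1).1.trans h2).trans h3

lemma GPF_not_sameSCC {p q : Q} {u : List A} {k : ℕ} {δs : List (Q × A × Q)} {σ : List ℕ}
    (hpq : SameSCC Δ p q) (h : GPF Δ p q u k δs σ) : False := by
  cases δs with
  | nil => exact absurd rfl h.ne
  | cons δ δs =>
    have hreach : Reach Δ δ.2.2 q := GPF_reach h δ (by simp)
    have h1 : SameSCC Δ p δ.1 := h.head_scc δ (by simp)
    have hstep : Reach Δ δ.1 δ.2.2 := Reach.step (h.trs δ (by simp))
    refine h.switch δ (by simp) ?_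
    rw [sameSCC_iff_reach]
    refine ⟨hstep, ?_⟩
    exact (hreach.trans (sameSCC_iff_reach.mp hpq).2).trans (sameSCC_iff_reach.mp h1).1

lemma GPX_resolve {p q : Q} {u : List A} {k : ℕ} {δs : List (Q × A × Q)} {σ : List ℕ}
    (hpq : ¬ SameSCC Δ p q) (h : GPX Δ p q u k δs σ) : GPF Δ p q u k δs σ :=
  h.resolve_left (fun h' => absurd h'.2.2.1 hpq)

lemma GPF_nonempty_word {p q : Q} {u : List A} {k : ℕ} {δs : List (Q × A × Q)} {σ : List ℕ}
    (h : GPF Δ p q u k δs σ) : k < u.length := by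
  cases δs with
  | nil => exact absurd rfl h.ne
  | cons δ δs =>
    cases σ with
    | nil => simpa using h.len
    | cons i σ =>
      have := h.bounds i (by simp)
      omega

variable (Δ) in
/-- runs from `p` to `q` over the suffix of `u` starting at offset `k`. -/
def RunT (p q : Q) (u : List A) (k : ℕ) :=
  {ρ : List Q // RunFrom Δ p (u.drop k) ρ ∧ endOf p ρ = q}

variable (Δ) in
def PairT (p q : Q) (u : List A) (k : ℕ) :=
  {x : List (Q × A × Q) × List ℕ // GPX Δ p q u k x.1 x.2}

def gPair (p q : Q) (u : List A) (k : ℕ)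
    (a : Σ y : {y : ℕ × Q × A × Q // FSw Δ p u k y}, PairT Δ y.1.2.2.2 q u y.1.1) :
    PairT Δ p q u k :=
  ⟨(a.1.1.2 :: a.2.1.1, a.1.1.1 :: a.2.1.2), Or.inr (GPF_cons.mpr ⟨a.1.2, a.2.2⟩)⟩

lemma gPair_bijective {p q : Q} {u : List A} {k : ℕ} (hpq : ¬ SameSCC Δ p q) :
    Function.Bijective (gPair (Δ := Δ) p q u k) := by
  constructor
  · rintro ⟨⟨⟨i1, δ1⟩, hF1⟩, ⟨⟨l1, s1⟩, hX1⟩⟩ ⟨⟨⟨i2, δ2⟩, hF2⟩, ⟨⟨l2, s2⟩, hX2⟩⟩ h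
    have h' := congrArg Subtype.val h
    simp only [gPair, Prod.mk.injEq, List.cons.injEq] at h'
    obtain ⟨⟨h1, h2⟩, h3, h4⟩ := h'
    subst h1; subst h2; subst h3; subst h4; rfl
  · rintro ⟨⟨δs, σ⟩, hX⟩
    have hG := GPX_resolve hpq hX
    cases δs with
    | nil => exact absurd rfl hG.ne
    | cons δ δs' =>
      cases σ with
      | nil => simpa using hG.len
      | cons i σ' =>
        obtain ⟨hF, hX'⟩ := GPF_cons.mp hG
        exact ⟨⟨⟨(i, δ), hF⟩, ⟨(δs', σ'), hX'⟩⟩, rfl⟩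

lemma getElem?_endOf (p : Q) (ρ : List Q) : (p :: ρ)[ρ.length]? = some (endOf p ρ) := by
  induction ρ generalizing p with
  | nil => simp
  | cons r ρ ih => simpa using ih r

lemma seg_word_eq {u : List A} {k t : ℕ} : (u.take (k + t)).drop k = (u.drop k).take t :=
  List.take_drop.symm

lemma drop_word_decomp {u : List A} {k i : ℕ} {a : A} (h1 : k + 1 ≤ i) (h2 : i ≤ u.length)
    (ha : u[i - 1]? = some a) :
    u.drop k = (u.take (i - 1)).drop k ++ a :: u.drop i := by
  have hlt : i - 1 < u.length := by omega
  have ha' : u[i - 1]'hlt = a := by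
    rw [List.getElem?_eq_getElem hlt] at ha; exact Option.some.inj ha
  have e1 : (u.take (i - 1)).drop k = (u.drop k).take (i - 1 - k) := by
    have h3 : k + (i - 1 - k) = i - 1 := by omega
    rw [List.take_drop, h3]
  have e2 : u.drop (i - 1) = a :: u.drop i := by
    rw [List.drop_eq_getElem_cons hlt, ha']
    have h4 : i - 1 + 1 = i := by omega
    rw [h4]
  calc u.drop k = (u.drop k).take (i - 1 - k) ++ (u.drop k).drop (i - 1 - k) :=
        (List.take_append_drop _ _).symm
    _ = (u.take (i - 1)).drop k ++ u.drop (i - 1) := by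
        rw [e1, List.drop_drop]
        congr 2
        omega
    _ = _ := by rw [e2]

lemma seg_length {u : List A} {k i : ℕ} (h1 : k + 1 ≤ i) (h2 : i ≤ u.length) :
    ((u.take (i - 1)).drop k).length = i - 1 - k := by
  rw [List.length_drop, List.length_take, Nat.min_eq_left (by omega)]

variable (Δ) in
noncomputable def gRun (p q : Q) (u : List A) (k : ℕ)
    (a : Σ y : {y : ℕ × Q × A × Q // FSw Δ p u k y}, RunT Δ y.1.2.2.2 q u y.1.1) :
    RunT Δ p q u k :=
  ⟨(hasRun_iff.mp a.1.2.run).choose ++ a.1.1.2.2.2 :: a.2.1, by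
    obtain ⟨hc1, hc2⟩ := (hasRun_iff.mp a.1.2.run).choose_spec
    refine ⟨?_, ?_⟩
    · rw [drop_word_decomp a.1.2.lb a.1.2.ub a.1.2.lab]
      refine hc1.append ?_
      rw [hc2]
      exact ⟨a.1.2.tr, a.2.2.1⟩
    · rw [endOf_append, hc2]
      simpa using a.2.2.2⟩

/-- prefix-and-switch positions in a combined run. -/
lemma combined_props {p : Q} {u : List A} {k i : ℕ} {δ : Q × A × Q}
    (hF : FSw Δ p u k (i, δ)) {ρ₁ ρ₂ : List Q}
    (h1 : RunFrom Δ p ((u.take (i - 1)).drop k) ρ₁) (e1 : endOf p ρ₁ = δ.1) :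
    (∀ s < ρ₁.length, ∀ x y, (p :: (ρ₁ ++ δ.2.2 :: ρ₂))[s]? = some x →
      (ρ₁ ++ δ.2.2 :: ρ₂)[s]? = some y → SameSCC Δ x y) ∧
    (p :: (ρ₁ ++ δ.2.2 :: ρ₂))[ρ₁.length]? = some δ.1 ∧
    (ρ₁ ++ δ.2.2 :: ρ₂)[ρ₁.length]? = some δ.2.2 := by
  refine ⟨?_, ?_, ?_⟩
  · intro s hs x y hx hy
    rw [← List.cons_append, List.getElem?_append_left (by simp; omega)] at hx
    rw [List.getElem?_append_left hs] at hy
    exact steps_same_of_sameSCC h1 (e1 ▸ hF.scc) s x y hx hy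
  · rw [← List.cons_append, List.getElem?_append_left (by simp), getElem?_endOf, e1]
  · rw [List.getElem?_append_right (le_refl _)]
    simp

lemma switch_eq {ρ : List Q} {p : Q} {t₁ t₂ : ℕ} {x₁ y₁ x₂ y₂ : Q}
    (m₁ : ∀ s < t₁, ∀ x y, (p :: ρ)[s]? = some x → ρ[s]? = some y → SameSCC Δ x y)
    (hx₁ : (p :: ρ)[t₁]? = some x₁) (hy₁ : ρ[t₁]? = some y₁) (sw₁ : ¬ SameSCC Δ x₁ y₁)
    (m₂ : ∀ s < t₂, ∀ x y, (p :: ρ)[s]? = some x → ρ[s]? = some y → SameSCC Δ x y)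
    (hx₂ : (p :: ρ)[t₂]? = some x₂) (hy₂ : ρ[t₂]? = some y₂) (sw₂ : ¬ SameSCC Δ x₂ y₂) :
    t₁ = t₂ := by
  rcases lt_trichotomy t₁ t₂ with h | h | h
  · exact absurd (m₂ t₁ h x₁ y₁ hx₁ hy₁) sw₁
  · exact h
  · exact absurd (m₁ t₂ h x₂ y₂ hx₂ hy₂) sw₂

lemma gRun_injective {p q : Q} {u : List A} {k : ℕ} :
    Function.Injective (gRun Δ p q u k) := by
  rintro ⟨⟨⟨i1, x1, a1, y1⟩, hF1⟩, ⟨ρ1, hr1, he1⟩⟩ ⟨⟨⟨i2, x2, a2, y2⟩, hF2⟩, ⟨ρ2, hr2, he2⟩⟩ h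
  have hv := congrArg Subtype.val h
  simp only [gRun] at hv
  obtain ⟨hc11, hc12⟩ := (hasRun_iff.mp hF1.run).choose_spec
  obtain ⟨hc21, hc22⟩ := (hasRun_iff.mp hF2.run).choose_spec
  set c₁ := (hasRun_iff.mp hF1.run).choose with hc₁def
  set c₂ := (hasRun_iff.mp hF2.run).choose with hc₂def
  have l1 : c₁.length = i1 - 1 - k := by rw [hc11.length_eq, seg_length hF1.lb hF1.ub]
  have l2 : c₂.length = i2 - 1 - k := by rw [hc21.length_eq, seg_length hF2.lb hF2.ub]
  obtain ⟨P1, P2, P3⟩ := combined_props hF1 (ρ₂ := ρ1) hc11 hc12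
  obtain ⟨Q1, Q2, Q3⟩ := combined_props hF2 (ρ₂ := ρ2) hc21 hc22
  rw [← hv] at Q1 Q2 Q3
  have hteq : c₁.length = c₂.length :=
    switch_eq P1 P2 P3 hF1.sw Q1 Q2 Q3 hF2.sw
  obtain ⟨hceq, hrest⟩ := List.append_inj hv hteq
  obtain ⟨hy, hρ⟩ := List.cons.injEq _ _ _ _ ▸ hrest
  have hieq : i1 = i2 := by
    have := hF1.lb; have := hF2.lb
    omega
  subst hieq
  have hxeq : x1 = x2 := by
    rw [← hceq] at hc22
    exact hc12.symm.trans hc22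
  have haeq : a1 = a2 := by
    have e1 : u[i1 - 1]? = some a1 := hF1.lab
    have e2 : u[i1 - 1]? = some a2 := hF2.lab
    rw [e1] at e2
    exact Option.some.inj e2
  subst hxeq; subst haeq; subst hy; subst hρ
  rfl

lemma gRun_surjective (hu : SCCUnambiguous Δ) {p q : Q} {u : List A} {k : ℕ}
    (hpq : ¬ SameSCC Δ p q) : Function.Surjective (gRun Δ p q u k) := by
  classical
  rintro ⟨ρ, hρ, hend⟩
  have hex : ∃ t : ℕ, ∃ x : Q, (p :: ρ)[t]? = some x ∧ ∃ y, ρ[t]? = some y ∧ ¬ SameSCC Δ x y := by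
    by_contra hcon
    refine hpq ?_
    rw [← hend]
    refine sccChain hρ ?_
    intro t x y hx hy
    by_contra hsw
    exact hcon ⟨t, x, hx, y, hy, hsw⟩
  set t₀ := Nat.find hex with ht₀def
  obtain ⟨x, hx, y, hy, hsw⟩ := Nat.find_spec hex
  have hmin : ∀ s < t₀, ∀ x' y', (p :: ρ)[s]? = some x' → ρ[s]? = some y' → SameSCC Δ x' y' := by
    intro s hs x' y' hx' hy'
    by_contra hsw'
    exact Nat.find_min hex hs ⟨x', hx', y', hy', hsw'⟩
  have hylen : t₀ < ρ.length := by
    by_contra hc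
    rw [List.getElem?_eq_none (by omega)] at hy
    simp at hy
  have hwlen : t₀ < (u.drop k).length := hρ.length_eq ▸ hylen
  have hulen : k + t₀ < u.length := by
    simp only [List.length_drop] at hwlen
    omega
  set i := k + t₀ + 1 with hidef
  set a := (u.drop k)[t₀]'hwlen with hadef
  have ha : (u.drop k)[t₀]? = some a := List.getElem?_eq_getElem hwlen
  have hlab : u[i - 1]? = some a := by
    have h5 : i - 1 = k + t₀ := by omega
    rw [h5, show u[k + t₀]? = (u.drop k)[t₀]? by simp [List.getElem?_drop]]
    exact ha
  -- same SCC from p to x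
  have hsccpx : SameSCC Δ p x := by
    have := sccChain (hρ.take t₀) (ρ := ρ.take t₀) ?_
    · rwa [endOf_take_eq t₀ x hx] at this
    · intro s x' y' hx' hy'
      have hslt : s < t₀ := by
        by_contra hc
        rw [List.getElem?_eq_none (by simp; omega)] at hy'
        simp at hy'
      refine hmin s hslt x' y' ?_ ?_
      · cases s with
        | zero => simpa using hx'
        | succ s =>
          simp only [List.getElem?_cons_succ] at hx' ⊢
          rwa [List.getElem?_take_of_lt (by omega)] at hx'
      · rwa [List.getElem?_take_of_lt hslt] at hy'
  have hword : (u.take (i - 1)).drop k = (u.drop k).take t₀ := by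
    have : i - 1 = k + t₀ := by omega
    rw [this, seg_word_eq]
  have hF : FSw Δ p u k (i, (x, a, y)) := by
    refine ⟨by omega, by omega, hlab, hρ.step' t₀ a x y ha hx hy, hsccpx, hsw, ?_⟩
    rw [hasRun_iff, hword]
    exact ⟨ρ.take t₀, hρ.take t₀, endOf_take_eq t₀ x hx⟩
  have hy' : (p :: ρ)[t₀ + 1]? = some y := by simpa using hy
  have hsuf : RunFrom Δ y (u.drop i) (ρ.drop (t₀ + 1)) := by
    have := hρ.drop (t₀ + 1)
    rw [endOf_take_eq (t₀ + 1) y hy', List.drop_drop] at this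
    have hieq : k + (t₀ + 1) = i := by omega
    rwa [hieq] at this
  have hsufend : endOf y (ρ.drop (t₀ + 1)) = q := by
    rw [← hend]
    conv_rhs => rw [← List.take_append_drop (t₀ + 1) ρ]
    rw [endOf_append, endOf_take_eq (t₀ + 1) y hy']
  refine ⟨⟨⟨(i, (x, a, y)), hF⟩, ⟨ρ.drop (t₀ + 1), hsuf, hsufend⟩⟩, ?_⟩
  apply Subtype.ext
  show (hasRun_iff.mp hF.run).choose ++ y :: ρ.drop (t₀ + 1) = ρ
  obtain ⟨hc1, hc2⟩ := (hasRun_iff.mp hF.run).choose_spec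
  have hchoose : (hasRun_iff.mp hF.run).choose = ρ.take t₀ := by
    refine run_unique hu hsccpx hc1 ?_ hc2 (endOf_take_eq t₀ x hx)
    rw [hword]
    exact hρ.take t₀
  rw [hchoose]
  have : ρ.drop t₀ = y :: ρ.drop (t₀ + 1) := by
    rw [List.drop_eq_getElem_cons hylen]
    congr 1
    exact Option.some.inj ((List.getElem?_eq_getElem hylen).symm.trans hy)
  rw [← this, List.take_append_drop]

lemma baseSame (hu : SCCUnambiguous Δ) {p q : Q} {u : List A} {k : ℕ} (hpq : SameSCC Δ p q) :
    Nonempty (RunT Δ p q u k ≃ PairT Δ p q u k) := by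
  haveI hs1 : Subsingleton (RunT Δ p q u k) := by
    constructor
    rintro ⟨ρ₁, h₁, e₁⟩ ⟨ρ₂, h₂, e₂⟩
    exact Subtype.ext (run_unique hu hpq h₁ h₂ e₁ e₂)
  haveI hs2 : Subsingleton (PairT Δ p q u k) := by
    constructor
    rintro ⟨⟨δs₁, σ₁⟩, hx₁⟩ ⟨⟨δs₂, σ₂⟩, hx₂⟩
    have h₁ := hx₁.resolve_right (fun hg => GPF_not_sameSCC hpq hg)
    have h₂ := hx₂.resolve_right (fun hg => GPF_not_sameSCC hpq hg)
    apply Subtype.ext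
    show (δs₁, σ₁) = (δs₂, σ₂)
    simp only at h₁ h₂
    rw [h₁.1, h₁.2.1, h₂.1, h₂.2.1]
  refine ⟨equivOfSubsingletonOfSubsingleton ?_ ?_⟩
  · intro r
    exact ⟨([], []), Or.inl ⟨rfl, rfl, hpq, hasRun_iff.2 ⟨r.1, r.2.1, r.2.2⟩⟩⟩
  · intro x
    have h := x.2.resolve_right (fun hg => GPF_not_sameSCC hpq hg)
    exact ⟨(hasRun_iff.mp h.2.2.2).choose, (hasRun_iff.mp h.2.2.2).choose_spec⟩

theorem mainEquiv (hu : SCCUnambiguous Δ) (u : List A) (k : ℕ) (p q : Q) :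
    Nonempty (RunT Δ p q u k ≃ PairT Δ p q u k) := by
  by_cases hpq : SameSCC Δ p q
  · exact baseSame hu hpq
  · have eRun : RunT Δ p q u k ≃
        Σ y : {y : ℕ × Q × A × Q // FSw Δ p u k y}, RunT Δ y.1.2.2.2 q u y.1.1 :=
      (Equiv.ofBijective _ ⟨gRun_injective, gRun_surjective hu hpq⟩).symm
    have ePair : (Σ y : {y : ℕ × Q × A × Q // FSw Δ p u k y}, PairT Δ y.1.2.2.2 q u y.1.1) ≃
        PairT Δ p q u k :=
      Equiv.ofBijective _ (gPair_bijective hpq)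
    have eIH : ∀ y : {y : ℕ × Q × A × Q // FSw Δ p u k y},
        RunT Δ y.1.2.2.2 q u y.1.1 ≃ PairT Δ y.1.2.2.2 q u y.1.1 :=
      fun y => (mainEquiv hu u y.1.1 y.1.2.2.2 q).some
    exact ⟨eRun.trans ((Equiv.sigmaCongrRight eIH).trans ePair)⟩
termination_by u.length - k
decreasing_by
  have h1 := y.2.lb
  have h2 := y.2.ub
  omega

lemma goodPair_iff_GPF {p q : Q} {u : List A} {δs : List (Q × A × Q)} {σ : List ℕ} :
    GoodPair Δ p q u δs σ ↔ GPF Δ p q u 0 δs σ := by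
  constructor
  · rintro ⟨h1, h2, h3, h4, h5, h6, h7, h8, h9, h10, h11, h12, h13⟩
    exact ⟨h1, h2, h3, h4, fun i hi => by have := h5 i hi; omega, h6, h7, h8, h9, h10,
      by simpa using h11, h12, h13⟩
  · intro h
    refine ⟨h.ne, h.len, h.trs, h.chain, fun i hi => by have := h.bounds i hi; omega,
      h.letter, h.head_scc, h.switch, h.mid_scc, h.last_scc, by simpa using h.head_run,
      h.mid_run, h.last_run⟩


/-- For an SCC-unambiguous automaton and states `p ≉ q` not in the same SCC, the runs
from `p` to `q` reading `u` are in bijection with the pairs of a switching-transition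
sequence and an increasing sequence of positions satisfying the factor conditions. -/
theorem runs_equiv_switching_pairs (Δ : Q → A → Q → Prop)
    (hscc : SCCUnambiguous Δ) (p q : Q) (hpq : ¬ SameSCC Δ p q) (u : List A) :
    Nonempty
      ({ρ : List Q // RunFrom Δ p u ρ ∧
          (p :: ρ).getLast (List.cons_ne_nil _ _) = q} ≃
        {x : List (Q × A × Q) × List ℕ // GoodPair Δ p q u x.1 x.2}) := by
  obtain ⟨e⟩ := mainEquiv hscc u 0 p q
  refine ⟨(Equiv.subtypeEquivRight ?_).trans (e.trans (Equiv.subtypeEquivRight ?_))⟩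
  · intro ρ
    rw [getLast_eq_endOf]
    simp only [List.drop_zero]
  · intro x
    constructor
    · intro h
      exact goodPair_iff_GPF.mpr (GPX_resolve hpq h)
    · intro h
      exact Or.inr (goodPair_iff_GPF.mp h)
end
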